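/- Main theorem, converse direction: for events E1, H1, E2, H2, E3, H3 with P(Hi) > 0 for i = 1, 2, 3, if x123 = x12 (equivalently, the prevision μ of the iterated conditional equals 1) and P(E1|H1) = P(E2|H2) = 1, then P(E3|H3) = 1. -/

import Mathlib

open MeasureTheory Set
open scoped Classical

noncomputable section

variable {Ω : Type*} [MeasurableSpace Ω]

/-- Indicator (with values in `ℝ`) of a set. -/
def ind (A : Set Ω) : Ω → ℝ := A.indicator 1

/-- Conditional probability `P(A|H) = P(A ∩ H)/P(H)`. -/
def condProb (P : Measure Ω) (A H : Set Ω) : ℝ :=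
  (P (A ∩ H)).toReal / (P H).toReal

/-- The (indicator of the) conditional event `A|H`,
`⟦A|H⟧ = 1_{A∩H} + P(A|H)·1_{Hᶜ}`. -/
def condEvent (P : Measure Ω) (A H : Set Ω) : Ω → ℝ :=
  fun ω => ind (A ∩ H) ω + condProb P A H * ind Hᶜ ω

/-- The prevision `z` of the conjunction `(A|H) ∧ (B|K)`:
`z = E[min(⟦A|H⟧, ⟦B|K⟧)·1_{H∪K}]/P(H∪K)`. -/
def conjPrev (P : Measure Ω) (A H B K : Set Ω) : ℝ :=
  (∫ ω, min (condEvent P A H ω) (condEvent P B K ω) * ind (H ∪ K) ω ∂P) /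
    (P (H ∪ K)).toReal

/-- The conjunction `⟦(A|H) ∧ (B|K)⟧ = min(⟦A|H⟧, ⟦B|K⟧)·1_{H∪K} + z·1_{(H∪K)ᶜ}`. -/
def conjCE (P : Measure Ω) (A H B K : Set Ω) : Ω → ℝ :=
  fun ω => min (condEvent P A H ω) (condEvent P B K ω) * ind (H ∪ K) ω
    + conjPrev P A H B K * ind (H ∪ K)ᶜ ω

/-- The iterated conditional `⟦(B|K)|(A|H)⟧ = ⟦(A|H)∧(B|K)⟧ + μ·(1 − ⟦A|H⟧)`,
with `μ = z / P(A|H)`. -/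
def iterCond (P : Measure Ω) (A H B K : Set Ω) : Ω → ℝ :=
  fun ω => conjCE P A H B K ω +
    (conjPrev P A H B K / condProb P A H) * (1 - condEvent P A H ω)

/-- Goodman–Nguyen logical implication between conditional events:
`A|H ⊑ B|K` iff `A∩H ⊆ B∩K` and `Bᶜ∩K ⊆ Aᶜ∩H`. -/
def GNle (A H B K : Set Ω) : Prop := A ∩ H ⊆ B ∩ K ∧ Bᶜ ∩ K ⊆ Aᶜ ∩ H

/-- Triple conjunction `⟦(E1|H1)∧(E2|H2)∧(E3|H3)⟧`, defined piecewise, except that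
on `H1ᶜ∩H2ᶜ∩H3ᶜ` it is set to `0` (it is irrelevant there for computing `x123`). -/
def c3base (P : Measure Ω) (E1 H1 E2 H2 E3 H3 : Set Ω) : Ω → ℝ := fun ω =>
  if ω ∈ E1 ∩ H1 ∩ (E2 ∩ H2) ∩ (E3 ∩ H3) then 1
  else if ω ∈ (E1ᶜ ∩ H1) ∪ (E2ᶜ ∩ H2) ∪ (E3ᶜ ∩ H3) then 0
  else if ω ∈ H1ᶜ ∩ (E2 ∩ H2) ∩ (E3 ∩ H3) then condProb P E1 H1
  else if ω ∈ H2ᶜ ∩ (E1 ∩ H1) ∩ (E3 ∩ H3) then condProb P E2 H2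
  else if ω ∈ H3ᶜ ∩ (E1 ∩ H1) ∩ (E2 ∩ H2) then condProb P E3 H3
  else if ω ∈ H1ᶜ ∩ H2ᶜ ∩ (E3 ∩ H3) then conjPrev P E1 H1 E2 H2
  else if ω ∈ H1ᶜ ∩ H3ᶜ ∩ (E2 ∩ H2) then conjPrev P E1 H1 E3 H3
  else if ω ∈ H2ᶜ ∩ H3ᶜ ∩ (E1 ∩ H1) then conjPrev P E2 H2 E3 H3
  else 0

/-- The prevision `x123 = E[C3·1_{H1∪H2∪H3}]/P(H1∪H2∪H3)` of the triple conjunction. -/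
def x123 (P : Measure Ω) (E1 H1 E2 H2 E3 H3 : Set Ω) : ℝ :=
  (∫ ω, c3base P E1 H1 E2 H2 E3 H3 ω * ind (H1 ∪ H2 ∪ H3) ω ∂P) /
    (P (H1 ∪ H2 ∪ H3)).toReal

/-- The triple conjunction `C3 = ⟦(E1|H1)∧(E2|H2)∧(E3|H3)⟧`, equal to `x123` on
`H1ᶜ∩H2ᶜ∩H3ᶜ` and given piecewise by `c3base` elsewhere. -/
def c3 (P : Measure Ω) (E1 H1 E2 H2 E3 H3 : Set Ω) : Ω → ℝ := fun ω =>
  if ω ∈ H1ᶜ ∩ H2ᶜ ∩ H3ᶜ then x123 P E1 H1 E2 H2 E3 H3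
  else c3base P E1 H1 E2 H2 E3 H3 ω

/-- The iterated conditional `⟦(E3|H3)|((E1|H1)∧(E2|H2))⟧ = C3 + μ·(1 − C12)`,
where `μ = x123/x12` and `C12 = ⟦(E1|H1)∧(E2|H2)⟧`. -/
def iter3 (P : Measure Ω) (E1 H1 E2 H2 E3 H3 : Set Ω) : Ω → ℝ := fun ω =>
  c3 P E1 H1 E2 H2 E3 H3 ω +
    (x123 P E1 H1 E2 H2 E3 H3 / conjPrev P E1 H1 E2 H2) *
      (1 - conjCE P E1 H1 E2 H2 ω)

section Helpers

variable {P : Measure Ω} {A H B K : Set Ω}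

lemma ind_of_mem {A : Set Ω} {ω : Ω} (h : ω ∈ A) : ind A ω = 1 := by simp [ind, h]

lemma ind_of_not_mem {A : Set Ω} {ω : Ω} (h : ω ∉ A) : ind A ω = 0 := by simp [ind, h]

lemma ind_nonneg (A : Set Ω) (ω : Ω) : 0 ≤ ind A ω := by
  by_cases h : ω ∈ A <;> simp [ind, h]

lemma ind_le_one (A : Set Ω) (ω : Ω) : ind A ω ≤ 1 := by
  by_cases h : ω ∈ A <;> simp [ind, h]

lemma measurable_ind {A : Set Ω} (hA : MeasurableSet A) : Measurable (ind A) :=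
  measurable_one.indicator hA

lemma condProb_nonneg (P : Measure Ω) (A H : Set Ω) : 0 ≤ condProb P A H :=
  div_nonneg ENNReal.toReal_nonneg ENNReal.toReal_nonneg

lemma condProb_le_one (P : Measure Ω) [IsFiniteMeasure P] (A H : Set Ω) :
    condProb P A H ≤ 1 :=
  div_le_one_of_le₀
    (ENNReal.toReal_mono (measure_ne_top P H) (measure_mono Set.inter_subset_right))
    ENNReal.toReal_nonneg

lemma condEvent_nonneg (P : Measure Ω) (A H : Set Ω) (ω : Ω) : 0 ≤ condEvent P A H ω :=
  add_nonneg (ind_nonneg _ _) (mul_nonneg (condProb_nonneg _ _ _) (ind_nonneg _ _))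

lemma condEvent_le_one (P : Measure Ω) [IsFiniteMeasure P] (A H : Set Ω) (ω : Ω) :
    condEvent P A H ω ≤ 1 := by
  unfold condEvent
  by_cases h : ω ∈ H
  · rw [ind_of_not_mem (show ω ∉ Hᶜ by simp [h])]
    simpa using ind_le_one (A ∩ H) ω
  · rw [ind_of_not_mem (fun hm => h hm.2), ind_of_mem (show ω ∈ Hᶜ by simp [h])]
    simpa using condProb_le_one P A H

lemma measurable_condEvent (hA : MeasurableSet A) (hH : MeasurableSet H) :
    Measurable (condEvent P A H) :=
  ((measurable_ind (hA.inter hH)).add (measurable_const.mul (measurable_ind hH.compl)))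

lemma condEvent_eq_one (hx : condProb P A H = 1) {ω : Ω} (h : ω ∉ Aᶜ ∩ H) :
    condEvent P A H ω = 1 := by
  unfold condEvent
  by_cases hH : ω ∈ H
  · have hA : ω ∈ A := by by_contra hA; exact h ⟨hA, hH⟩
    rw [ind_of_mem (show ω ∈ A ∩ H from ⟨hA, hH⟩), ind_of_not_mem (show ω ∉ Hᶜ by simp [hH])]; ring
  · rw [ind_of_not_mem (fun hm => hH hm.2), ind_of_mem (show ω ∈ Hᶜ by simp [hH]), hx]; ring

lemma integrable_of_bounds [IsFiniteMeasure P] {f : Ω → ℝ} (hf : Measurable f)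
    (h0 : ∀ ω, 0 ≤ f ω) (h1 : ∀ ω, f ω ≤ 1) : Integrable f P :=
  (integrable_const (1 : ℝ)).mono' hf.aestronglyMeasurable
    (Filter.Eventually.of_forall fun ω => by
      rw [Real.norm_eq_abs, abs_of_nonneg (h0 ω)]; exact h1 ω)

lemma integral_ind [IsFiniteMeasure P] (hA : MeasurableSet A) :
    ∫ ω, ind A ω ∂P = (P A).toReal := integral_indicator_one hA

lemma conj_integrand_nonneg (P : Measure Ω) (A H B K : Set Ω) (ω : Ω) :
    0 ≤ min (condEvent P A H ω) (condEvent P B K ω) * ind (H ∪ K) ω :=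
  mul_nonneg (le_min (condEvent_nonneg _ _ _ _) (condEvent_nonneg _ _ _ _)) (ind_nonneg _ _)

lemma conj_integrand_le_one (P : Measure Ω) [IsFiniteMeasure P] (A H B K : Set Ω) (ω : Ω) :
    min (condEvent P A H ω) (condEvent P B K ω) * ind (H ∪ K) ω ≤ 1 :=
  mul_le_one₀ (min_le_of_left_le (condEvent_le_one _ _ _ _)) (ind_nonneg _ _) (ind_le_one _ _)

lemma integrable_conj_integrand [IsFiniteMeasure P] (hA : MeasurableSet A)
    (hH : MeasurableSet H) (hB : MeasurableSet B) (hK : MeasurableSet K) :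
    Integrable (fun ω => min (condEvent P A H ω) (condEvent P B K ω) * ind (H ∪ K) ω) P :=
  integrable_of_bounds
    (((measurable_condEvent hA hH).min (measurable_condEvent hB hK)).mul
      (measurable_ind (hH.union hK)))
    (conj_integrand_nonneg P A H B K) (conj_integrand_le_one P A H B K)

lemma integrable_ind [IsFiniteMeasure P] (hA : MeasurableSet A) : Integrable (ind A) P :=
  integrable_of_bounds (measurable_ind hA) (ind_nonneg A) (ind_le_one A)

lemma conjPrev_nonneg (P : Measure Ω) (A H B K : Set Ω) : 0 ≤ conjPrev P A H B K :=
  div_nonneg (integral_nonneg (conj_integrand_nonneg P A H B K)) ENNReal.toReal_nonneg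

lemma conjPrev_le_one [IsFiniteMeasure P] (hA : MeasurableSet A)
    (hH : MeasurableSet H) (hB : MeasurableSet B) (hK : MeasurableSet K) :
    conjPrev P A H B K ≤ 1 := by
  unfold conjPrev
  refine div_le_one_of_le₀ ?_ ENNReal.toReal_nonneg
  calc (∫ ω, min (condEvent P A H ω) (condEvent P B K ω) * ind (H ∪ K) ω ∂P)
      ≤ ∫ ω, ind (H ∪ K) ω ∂P := by
        refine integral_mono (integrable_conj_integrand hA hH hB hK)
          (integrable_ind (hH.union hK)) (fun ω => ?_)
        exact mul_le_of_le_one_left (ind_nonneg _ _)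
          (min_le_of_left_le (condEvent_le_one _ _ _ _))
    _ = (P (H ∪ K)).toReal := integral_indicator_one (hH.union hK)

lemma compl_inter_null [IsFiniteMeasure P] (hA : MeasurableSet A)
    (hHpos : 0 < P H) (hx : condProb P A H = 1) : P (Aᶜ ∩ H) = 0 := by
  have hne : (P H).toReal ≠ 0 :=
    (ENNReal.toReal_pos hHpos.ne' (measure_ne_top P H)).ne'
  have htr : (P (A ∩ H)).toReal = (P H).toReal := by
    unfold condProb at hx
    exact (div_eq_one_iff_eq hne).mp hx
  have heq : P (A ∩ H) = P H :=
    (ENNReal.toReal_eq_toReal_iff' (measure_ne_top _ _) (measure_ne_top _ _)).mp htr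
  have hsplit : P (H ∩ A) + P (H \ A) = P H := measure_inter_add_diff H hA
  rw [Set.inter_comm] at heq
  rw [heq] at hsplit
  have hz : P (H \ A) = 0 :=
    (ENNReal.add_right_inj (measure_ne_top P H)).mp (by rw [add_zero]; exact hsplit)
  rwa [show Aᶜ ∩ H = H \ A from by rw [Set.diff_eq, Set.inter_comm]]

lemma conjPrev_eq_one [IsProbabilityMeasure P] (hA : MeasurableSet A)
    (hH : MeasurableSet H) (hB : MeasurableSet B) (hK : MeasurableSet K)
    (hHpos : 0 < P H) (hxA : condProb P A H = 1) (hxB : condProb P B K = 1) :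
    conjPrev P A H B K = 1 := by
  have hNA : P (Aᶜ ∩ H) = 0 := compl_inter_null hA hHpos hxA
  have hNB : P (Bᶜ ∩ K) = 0 := by
    by_cases hKpos : 0 < P K
    · exact compl_inter_null hB hKpos hxB
    · have : P K = 0 := by
        by_contra hc; exact hKpos (lt_of_le_of_ne zero_le (Ne.symm hc))
      exact measure_mono_null Set.inter_subset_right this
  have hN : P ((Aᶜ ∩ H) ∪ (Bᶜ ∩ K)) = 0 := measure_union_null hNA hNB
  have hae : ∀ᵐ ω ∂P, ω ∉ (Aᶜ ∩ H) ∪ (Bᶜ ∩ K) := measure_eq_zero_iff_ae_notMem.mp hN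
  have hcong : (fun ω => min (condEvent P A H ω) (condEvent P B K ω) * ind (H ∪ K) ω)
      =ᵐ[P] ind (H ∪ K) := by
    filter_upwards [hae] with ω hω
    have hω1 : ω ∉ Aᶜ ∩ H := fun h => hω (Or.inl h)
    have hω2 : ω ∉ Bᶜ ∩ K := fun h => hω (Or.inr h)
    rw [condEvent_eq_one hxA hω1, condEvent_eq_one hxB hω2, min_self, one_mul]
  unfold conjPrev
  rw [integral_congr_ae hcong, integral_ind (hH.union hK)]
  exact div_self
    (ENNReal.toReal_pos (lt_of_lt_of_le hHpos (measure_mono Set.subset_union_left)).ne'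
      (measure_ne_top _ _)).ne'

variable {E1 H1 E2 H2 E3 H3 : Set Ω}

lemma c3base_nonneg (P : Measure Ω) (E1 H1 E2 H2 E3 H3 : Set Ω) (ω : Ω) :
    0 ≤ c3base P E1 H1 E2 H2 E3 H3 ω := by
  unfold c3base
  split_ifs <;>
    first
      | exact zero_le_one
      | exact le_refl (0 : ℝ)
      | exact condProb_nonneg _ _ _
      | exact conjPrev_nonneg _ _ _ _ _

lemma c3base_le_one [IsFiniteMeasure P]
    (hE1 : MeasurableSet E1) (hH1 : MeasurableSet H1)
    (hE2 : MeasurableSet E2) (hH2 : MeasurableSet H2)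
    (hE3 : MeasurableSet E3) (hH3 : MeasurableSet H3) (ω : Ω) :
    c3base P E1 H1 E2 H2 E3 H3 ω ≤ 1 := by
  unfold c3base
  split_ifs <;>
    first
      | exact le_refl (1 : ℝ)
      | exact zero_le_one
      | exact condProb_le_one _ _ _
      | exact conjPrev_le_one hE1 hH1 hE2 hH2
      | exact conjPrev_le_one hE1 hH1 hE3 hH3
      | exact conjPrev_le_one hE2 hH2 hE3 hH3

lemma measurable_c3base
    (hE1 : MeasurableSet E1) (hH1 : MeasurableSet H1)
    (hE2 : MeasurableSet E2) (hH2 : MeasurableSet H2)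
    (hE3 : MeasurableSet E3) (hH3 : MeasurableSet H3) :
    Measurable (c3base P E1 H1 E2 H2 E3 H3) := by
  unfold c3base
  refine Measurable.ite ?_ measurable_const ?_
  · exact ((hE1.inter hH1).inter (hE2.inter hH2)).inter (hE3.inter hH3)
  refine Measurable.ite ?_ measurable_const ?_
  · exact ((hE1.compl.inter hH1).union (hE2.compl.inter hH2)).union (hE3.compl.inter hH3)
  refine Measurable.ite ?_ measurable_const ?_
  · exact (hH1.compl.inter (hE2.inter hH2)).inter (hE3.inter hH3)
  refine Measurable.ite ?_ measurable_const ?_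
  · exact (hH2.compl.inter (hE1.inter hH1)).inter (hE3.inter hH3)
  refine Measurable.ite ?_ measurable_const ?_
  · exact (hH3.compl.inter (hE1.inter hH1)).inter (hE2.inter hH2)
  refine Measurable.ite ?_ measurable_const ?_
  · exact (hH1.compl.inter hH2.compl).inter (hE3.inter hH3)
  refine Measurable.ite ?_ measurable_const ?_
  · exact (hH1.compl.inter hH3.compl).inter (hE2.inter hH2)
  refine Measurable.ite ?_ measurable_const measurable_const
  exact (hH2.compl.inter hH3.compl).inter (hE1.inter hH1)

end Helpers

/-- Main theorem, converse direction: if `x123 = x12` (equivalently, the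
prevision `μ` of the iterated conditional equals `1`) and
`P(E1|H1) = P(E2|H2) = 1`, then `P(E3|H3) = 1`. -/
theorem main_converse (P : Measure Ω) [IsProbabilityMeasure P]
    (E1 H1 E2 H2 E3 H3 : Set Ω)
    (hE1 : MeasurableSet E1) (hH1 : MeasurableSet H1)
    (hE2 : MeasurableSet E2) (hH2 : MeasurableSet H2)
    (hE3 : MeasurableSet E3) (hH3 : MeasurableSet H3)
    (h1 : 0 < P H1) (h2 : 0 < P H2) (h3 : 0 < P H3)
    (h12 : x123 P E1 H1 E2 H2 E3 H3 = conjPrev P E1 H1 E2 H2)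
    (hx1 : condProb P E1 H1 = 1) (hx2 : condProb P E2 H2 = 1) :
    condProb P E3 H3 = 1 := by
  have h12' : conjPrev P E1 H1 E2 H2 = 1 :=
    conjPrev_eq_one hE1 hH1 hE2 hH2 h1 hx1 hx2
  have hx123 : x123 P E1 H1 E2 H2 E3 H3 = 1 := h12.trans h12'
  set Hu := H1 ∪ H2 ∪ H3 with hHudef
  have hHu : MeasurableSet Hu := (hH1.union hH2).union hH3
  have hHupos : 0 < P Hu :=
    lt_of_lt_of_le h1 (measure_mono (Set.subset_union_left.trans Set.subset_union_left))
  have hHune : (P Hu).toReal ≠ 0 :=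
    (ENNReal.toReal_pos hHupos.ne' (measure_ne_top _ _)).ne'
  have hnum : ∫ ω, c3base P E1 H1 E2 H2 E3 H3 ω * ind Hu ω ∂P = (P Hu).toReal := by
    unfold x123 at hx123
    exact (div_eq_one_iff_eq hHune).mp hx123
  set g : Ω → ℝ := fun ω => c3base P E1 H1 E2 H2 E3 H3 ω * ind Hu ω with hg
  have hgint : Integrable g P :=
    integrable_of_bounds
      ((measurable_c3base hE1 hH1 hE2 hH2 hE3 hH3).mul (measurable_ind hHu))
      (fun ω => mul_nonneg (c3base_nonneg _ _ _ _ _ _ _ _) (ind_nonneg _ _))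
      (fun ω => mul_le_one₀ (c3base_le_one hE1 hH1 hE2 hH2 hE3 hH3 ω)
        (ind_nonneg _ _) (ind_le_one _ _))
  have hiint : Integrable (ind Hu) P := integrable_ind hHu
  set f : Ω → ℝ := fun ω => ind Hu ω - g ω with hfdef
  have hfnn : 0 ≤ f := fun ω =>
    sub_nonneg.mpr (mul_le_of_le_one_left (ind_nonneg _ _)
      (c3base_le_one hE1 hH1 hE2 hH2 hE3 hH3 ω))
  have hfint : Integrable f P := hiint.sub hgint
  have hzero : ∫ ω, f ω ∂P = 0 := by
    simp only [hfdef]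
    rw [integral_sub hiint hgint, integral_ind hHu]
    rw [show (∫ ω, g ω ∂P) = (P Hu).toReal from hnum]
    ring
  have hae : f =ᵐ[P] 0 := (integral_eq_zero_iff_of_nonneg hfnn hfint).mp hzero
  have hmeas0 : P {ω | f ω ≠ 0} = 0 := by
    have := ae_iff.mp hae
    simpa using this
  have hsub : E3ᶜ ∩ H3 ⊆ {ω | f ω ≠ 0} := by
    intro ω hω
    have h3mem : ω ∈ Hu := Or.inr hω.2
    have hc : c3base P E1 H1 E2 H2 E3 H3 ω = 0 := by
      unfold c3base
      rw [if_neg, if_pos]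
      · exact Or.inr hω
      · intro hmem; exact hω.1 hmem.2.1
    simp [hfdef, hg, hc, ind_of_mem h3mem]
  have hnull : P (E3ᶜ ∩ H3) = 0 := measure_mono_null hsub hmeas0
  have hsplit : P (H3 ∩ E3) + P (H3 \ E3) = P H3 := measure_inter_add_diff H3 hE3
  have hd : P (H3 \ E3) = 0 := by
    rwa [show H3 \ E3 = E3ᶜ ∩ H3 from by rw [Set.diff_eq, Set.inter_comm]]
  rw [hd, add_zero] at hsplit
  have hH3ne : (P H3).toReal ≠ 0 :=
    (ENNReal.toReal_pos h3.ne' (measure_ne_top _ _)).ne'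
  unfold condProb
  rw [Set.inter_comm, hsplit]
  exact div_self hH3ne

end
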